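/- Let X₁, …, X_k be independent identically distributed real random variables with finite variance, and let Y = max_{1 ≤ i ≤ k} X_i. Then Var(Y) ≤ k·Var(X₁). -/

import Mathlib

open MeasureTheory ProbabilityTheory Finset

section Aux

variable {Ω : Type*} [MeasureSpace Ω] [IsProbabilityMeasure (ℙ : Measure Ω)]

lemma aux_identDistrib_fst (Z : Ω → ℝ) (hZ : Measurable Z) :
    IdentDistrib (fun p : Ω × Ω => Z p.1) Z ((ℙ : Measure Ω).prod ℙ) ℙ := by
  refine ⟨(hZ.comp measurable_fst).aemeasurable, hZ.aemeasurable, ?_⟩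
  have h : (fun p : Ω × Ω => Z p.1) = Z ∘ Prod.fst := rfl
  rw [h, ← Measure.map_map hZ measurable_fst, Measure.map_fst_prod]
  simp

lemma aux_identDistrib_snd (Z : Ω → ℝ) (hZ : Measurable Z) :
    IdentDistrib (fun p : Ω × Ω => Z p.2) Z ((ℙ : Measure Ω).prod ℙ) ℙ := by
  refine ⟨(hZ.comp measurable_snd).aemeasurable, hZ.aemeasurable, ?_⟩
  have h : (fun p : Ω × Ω => Z p.2) = Z ∘ Prod.snd := rfl
  rw [h, ← Measure.map_map hZ measurable_snd, Measure.map_snd_prod]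
  simp

lemma aux_indepFun_fst_snd :
    IndepFun (Prod.fst : Ω × Ω → Ω) Prod.snd ((ℙ : Measure Ω).prod ℙ) := by
  rw [indepFun_iff_map_prod_eq_prod_map_map measurable_fst.aemeasurable
    measurable_snd.aemeasurable]
  have h : (fun ω : Ω × Ω => (ω.1, ω.2)) = id := rfl
  rw [h, Measure.map_id, Measure.map_fst_prod, Measure.map_snd_prod]
  simp

/-- `E[(Z - Z')²] = 2 Var Z` for an independent copy `Z'` of `Z`. -/
lemma aux_two_variance (Z : Ω → ℝ) (hZ : Measurable Z) (h2 : MemLp Z 2 ℙ) :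
    ∫ p : Ω × Ω, (Z p.1 - Z p.2) ^ 2 ∂((ℙ : Measure Ω).prod ℙ) = 2 * variance Z ℙ := by
  set μ := (ℙ : Measure Ω).prod (ℙ : Measure Ω) with hμ
  set Z1 : Ω × Ω → ℝ := fun p => Z p.1 with hZ1
  set Z2 : Ω × Ω → ℝ := fun p => Z p.2 with hZ2
  have id1 : IdentDistrib Z1 Z μ ℙ := aux_identDistrib_fst Z hZ
  have id2 : IdentDistrib Z2 Z μ ℙ := aux_identDistrib_snd Z hZ
  have h1 : MemLp Z1 2 μ := id1.symm.memLp_snd h2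
  have h2' : MemLp Z2 2 μ := id2.symm.memLp_snd h2
  have hind : IndepFun Z1 Z2 μ := aux_indepFun_fst_snd.comp hZ hZ
  have hindneg : IndepFun Z1 (-Z2) μ := hind.comp measurable_id measurable_neg
  have hW : MemLp (Z1 - Z2) 2 μ := h1.sub h2'
  have hvneg : variance (-Z2) μ = variance Z2 μ := by
    have h : (-Z2) = fun p => (-1 : ℝ) * Z2 p := by funext p; simp
    rw [h, variance_const_mul]; norm_num
  have varW : variance (Z1 - Z2) μ = 2 * variance Z ℙ := by
    rw [sub_eq_add_neg, hindneg.variance_add h1 h2'.neg, hvneg,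
      id1.variance_eq, id2.variance_eq]
    ring
  have meanW : ∫ p, (Z1 - Z2) p ∂μ = 0 := by
    simp only [Pi.sub_apply]
    rw [integral_sub (h1.integrable one_le_two) (h2'.integrable one_le_two),
      id1.integral_eq, id2.integral_eq, sub_self]
  have hdef := variance_eq_sub hW
  rw [meanW] at hdef
  simp only [ne_eq, OfNat.ofNat_ne_zero, not_false_eq_true, zero_pow, sub_zero] at hdef
  rw [← varW, hdef]
  rfl

end Aux

lemma aux_sq_sup'_sub_le {k : ℕ} [NeZero k] (f g : Fin k → ℝ) :
    (univ.sup' univ_nonempty f - univ.sup' univ_nonempty g) ^ 2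
      ≤ ∑ i, (f i - g i) ^ 2 := by
  set M := univ.sup' (univ_nonempty (α := Fin k)) (fun i => |f i - g i|) with hM
  have key : ∀ (u v : Fin k → ℝ),
      univ.sup' univ_nonempty u - univ.sup' univ_nonempty v
        ≤ univ.sup' univ_nonempty (fun i => |u i - v i|) := by
    intro u v
    rw [sub_le_iff_le_add]
    apply Finset.sup'_le
    intro i _
    have h1 : v i ≤ univ.sup' univ_nonempty v := Finset.le_sup' v (mem_univ i)
    have h2 : |u i - v i| ≤ univ.sup' univ_nonempty (fun j => |u j - v j|) :=
      Finset.le_sup' (fun j => |u j - v j|) (mem_univ i)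
    have h3 : u i - v i ≤ |u i - v i| := le_abs_self _
    linarith
  have habs : |univ.sup' univ_nonempty f - univ.sup' univ_nonempty g| ≤ M := by
    rw [abs_le]
    constructor
    · have := key g f
      have heq : (fun i => |g i - f i|) = fun i => |f i - g i| := by
        funext i; rw [abs_sub_comm]
      rw [heq] at this
      linarith
    · exact key f g
  obtain ⟨i0, _, hi0⟩ := Finset.exists_mem_eq_sup' (univ_nonempty (α := Fin k))
    (fun i => |f i - g i|)
  have hMsq : M ^ 2 = (f i0 - g i0) ^ 2 := by rw [hM, hi0, sq_abs]
  have h1 : (univ.sup' univ_nonempty f - univ.sup' univ_nonempty g) ^ 2 ≤ M ^ 2 := by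
    have hMnn : 0 ≤ M := (abs_nonneg _).trans habs
    exact sq_le_sq' (by linarith [neg_abs_le (univ.sup' univ_nonempty f -
      univ.sup' univ_nonempty g)]) ((le_abs_self _).trans habs)
  refine h1.trans ?_
  rw [hMsq]
  exact Finset.single_le_sum (f := fun i => (f i - g i) ^ 2)
    (fun i _ => sq_nonneg _) (mem_univ i0)

/-- For `X₁, …, X_k` iid real random variables with finite variance and
`Y = max_i X_i`, we have `Var(Y) ≤ k * Var(X₁)`. -/
theorem variance_max_le {Ω : Type*} [MeasureSpace Ω]
    [IsProbabilityMeasure (ℙ : Measure Ω)] {k : ℕ} [NeZero k]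
    (X : Fin k → Ω → ℝ)
    (hmeas : ∀ i, Measurable (X i))
    (hL2 : ∀ i, MemLp (X i) 2 ℙ)
    (hindep : iIndepFun X ℙ)
    (hident : ∀ i j : Fin k, IdentDistrib (X i) (X j) ℙ ℙ) :
    variance (fun ω => univ.sup' univ_nonempty (fun i => X i ω)) ℙ
      ≤ k * variance (X 0) ℙ := by
  set F : Ω → ℝ := fun ω => univ.sup' univ_nonempty (fun i => X i ω) with hF
  have hFmeas : Measurable F := by
    have := Finset.measurable_sup' (univ_nonempty (α := Fin k)) (fun i _ => hmeas i)
    have heq : univ.sup' univ_nonempty X = F := by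
      funext ω; rw [Finset.sup'_apply]
    rwa [heq] at this
  have hF2 : MemLp F 2 ℙ := by
    have hsum : MemLp (fun ω => ∑ i, |X i ω|) 2 ℙ := by
      have h := memLp_finset_sum' (μ := (ℙ : Measure Ω)) (p := 2) univ
        (fun (i : Fin k) _ => (hL2 i).abs)
      have heq : (fun ω => ∑ i : Fin k, |X i ω|) = ∑ i : Fin k, |X i| := by
        funext ω; simp
      rw [heq]; exact h
    refine hsum.mono hFmeas.aestronglyMeasurable ?_
    filter_upwards with ω
    obtain ⟨i0, _, hi0⟩ := Finset.exists_mem_eq_sup' (univ_nonempty (α := Fin k))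
      (fun i => X i ω)
    have h1 : |F ω| = |X i0 ω| := by rw [hF]; simp [hi0]
    have h2 : |X i0 ω| ≤ ∑ i, |X i ω| :=
      Finset.single_le_sum (f := fun i => |X i ω|) (fun i _ => abs_nonneg _) (mem_univ i0)
    have h3 : 0 ≤ ∑ i, |X i ω| := Finset.sum_nonneg fun i _ => abs_nonneg _
    simp only [Real.norm_eq_abs]
    rw [abs_of_nonneg h3]
    exact h1.le.trans h2
  set μ := (ℙ : Measure Ω).prod (ℙ : Measure Ω) with hμ
  have hFkey : ∫ p, (F p.1 - F p.2) ^ 2 ∂μ = 2 * variance F ℙ :=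
    aux_two_variance F hFmeas hF2
  have hXkey : ∀ i, ∫ p, (X i p.1 - X i p.2) ^ 2 ∂μ = 2 * variance (X i) ℙ :=
    fun i => aux_two_variance (X i) (hmeas i) (hL2 i)
  have hptwise : ∀ p : Ω × Ω,
      (F p.1 - F p.2) ^ 2 ≤ ∑ i, (X i p.1 - X i p.2) ^ 2 := fun p =>
    aux_sq_sup'_sub_le (fun i => X i p.1) (fun i => X i p.2)
  have hXint : ∀ i : Fin k, Integrable (fun p => (X i p.1 - X i p.2) ^ 2) μ := by
    intro i
    have ha : MemLp (fun p : Ω × Ω => X i p.1) 2 μ :=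
      (aux_identDistrib_fst (X i) (hmeas i)).symm.memLp_snd (hL2 i)
    have hb : MemLp (fun p : Ω × Ω => X i p.2) 2 μ :=
      (aux_identDistrib_snd (X i) (hmeas i)).symm.memLp_snd (hL2 i)
    exact (ha.sub hb).integrable_sq
  have hmono : ∫ p, (F p.1 - F p.2) ^ 2 ∂μ
      ≤ ∫ p, ∑ i, (X i p.1 - X i p.2) ^ 2 ∂μ := by
    refine integral_mono_of_nonneg ?_ (integrable_finset_sum _ fun i _ => hXint i) ?_
    · filter_upwards with p; exact sq_nonneg _
    · filter_upwards with p; exact hptwise p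
  have hsum : ∫ p, ∑ i, (X i p.1 - X i p.2) ^ 2 ∂μ = ∑ i, 2 * variance (X i) ℙ := by
    rw [integral_finset_sum _ fun i _ => hXint i]
    exact Finset.sum_congr rfl fun i _ => hXkey i
  have hvar : ∀ i : Fin k, variance (X i) ℙ = variance (X 0) ℙ :=
    fun i => (hident i 0).variance_eq
  have hsum2 : ∑ i : Fin k, 2 * variance (X i) ℙ = 2 * (k * variance (X 0) ℙ) := by
    rw [Finset.sum_congr rfl fun i _ => by rw [hvar i]]
    simp [Finset.sum_const, Finset.card_univ]
    ring
  have : 2 * variance F ℙ ≤ 2 * (k * variance (X 0) ℙ) := by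
    rw [← hFkey, ← hsum2, ← hsum]; exact hmono
  linarith
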